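/- arXiv:2411.16386 — 2 statements merged into one kernel-verified Lean document; each statement's English description precedes it below -/
import Mathlib

section
/- Let K be a variety of τ-algebras, and let N_K := N_τ̄ / Th(K) be the quotient of the initial infinitary clone τ-algebra N_τ̄ by the congruence Th(K). Then the τ-algebra N_K↓ belongs to K and is the free K-algebra over the generating set {e_0/Th(K), e_1/Th(K), …}: for every B ∈ K and every assignment of the generators into B, there is a unique τ-algebra homomorphism N_K↓ → B extending it. -/
/-! ### τ-algebras (homogeneous type: every symbol of arity ω) -/

/-- `α` is a homomorphism of τ-algebras from `(A, FA)` to `(B, FB)`. -/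
def IsAlgHom {τ A B : Type} (FA : τ → (ℕ → A) → A) (FB : τ → (ℕ → B) → B)
    (α : A → B) : Prop :=
  ∀ f s, α (FA f s) = FB f (fun i => α (s i))

/-! ### Infinitary clone τ-algebras -/

/-- The data of an infinitary clone τ-algebra on carrier `C`. -/
structure CloneData (τ C : Type) where
  e : ℕ → C
  F : τ → C
  q : C → (ℕ → C) → C

/-- Axioms (N1)–(N3) of infinitary clone τ-algebras. -/
def IsCloneAlg {τ C : Type} (d : CloneData τ C) : Prop :=
  (∀ (i : ℕ) (s : ℕ → C), d.q (d.e i) s = s i) ∧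
  (∀ x : C, d.q x d.e = x) ∧
  (∀ (x : C) (y z : ℕ → C), d.q (d.q x y) z = d.q x (fun i => d.q (y i) z))

/-- Homomorphisms of infinitary clone τ-algebras. -/
def IsCloneHom {τ C D : Type} (dC : CloneData τ C) (dD : CloneData τ D)
    (α : C → D) : Prop :=
  (∀ i, α (dC.e i) = dD.e i) ∧
  (∀ f, α (dC.F f) = dD.F f) ∧
  (∀ x s, α (dC.q x s) = dD.q (α x) (fun i => α (s i)))

/-- Subuniverses of an infinitary clone τ-algebra. -/
def IsCloneSubuniv {τ C : Type} (d : CloneData τ C) (S : Set C) : Prop :=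
  (∀ i, d.e i ∈ S) ∧ (∀ f, d.F f ∈ S) ∧
  (∀ (a : C) (s : ℕ → C), a ∈ S → (∀ i, s i ∈ S) → d.q a s ∈ S)

/-- The full functional infinitary clone τ-algebra `O^(ω)_A` on the value domain `(A, FA)`. -/
def fullCloneData {τ : Type} (A : Type) (FA : τ → (ℕ → A) → A) :
    CloneData τ ((ℕ → A) → A) where
  e i := fun s => s i
  F f := FA f
  q g h := fun s => g (fun i => h i s)

/-- The τ-algebra `C↓` associated with an infinitary clone τ-algebra. -/
def downOp {τ C : Type} (d : CloneData τ C) : τ → (ℕ → C) → C :=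
  fun f s => d.q (d.F f) s

/-- The clone structure induced on a subuniverse. -/
def subCloneData {τ C : Type} (d : CloneData τ C) {S : Set C}
    (h : IsCloneSubuniv d S) : CloneData τ S where
  e i := ⟨d.e i, h.1 i⟩
  F f := ⟨d.F f, h.2.1 f⟩
  q a s := ⟨d.q a.1 (fun i => (s i).1), h.2.2 _ _ a.2 (fun i => (s i).2)⟩

/-! ### Terms -/

/-- τ-terms over the variables `e 0, e 1, …`. -/
inductive Term (τ : Type) : Type
  | e : ℕ → Term τ
  | app : τ → (ℕ → Term τ) → Term τ

/-- Term operation of a τ-term on the τ-algebra `(A, FA)`. -/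
def Term.eval {τ A : Type} (FA : τ → (ℕ → A) → A) : Term τ → (ℕ → A) → A
  | .e i, s => s i
  | .app f t, s => FA f (fun i => (t i).eval FA s)

/-- Simultaneous substitution of terms for variables. -/
def Term.subst {τ : Type} : Term τ → (ℕ → Term τ) → Term τ
  | .e i, u => u i
  | .app f t, u => .app f (fun i => (t i).subst u)

theorem Term.eval_subst {τ A : Type} (FA : τ → (ℕ → A) → A) :
    ∀ (t : Term τ) (u : ℕ → Term τ) (s : ℕ → A),
      (t.subst u).eval FA s = t.eval FA (fun i => (u i).eval FA s)
  | .e _, _, _ => rfl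
  | .app f t, u, s => by
      simp only [Term.subst, Term.eval]
      congr 1
      funext i
      exact Term.eval_subst FA (t i) u s

/-- The initial infinitary clone τ-algebra `N_τ̄` on the set of τ-terms. -/
def initData (τ : Type) : CloneData τ (Term τ) where
  e := Term.e
  F f := Term.app f Term.e
  q := Term.subst

/-- The term infinitary clone τ-algebra `A↑` (as a clone structure on the set
of term operations of `A`). -/
def upData {τ A : Type} (FA : τ → (ℕ → A) → A) :
    CloneData τ {g : (ℕ → A) → A // ∃ t : Term τ, g = Term.eval FA t} where
  e i := ⟨fun s => s i, ⟨Term.e i, rfl⟩⟩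
  F f := ⟨FA f, ⟨Term.app f Term.e, by funext s; rfl⟩⟩
  q g h := ⟨fun s => g.1 (fun i => (h i).1 s), by
    obtain ⟨t, ht⟩ := g.2
    refine ⟨t.subst (fun i => (h i).2.choose), ?_⟩
    funext s
    rw [Term.eval_subst, ← ht]
    exact congrArg _ (funext fun i => by rw [← (h i).2.choose_spec])⟩

/-! ### Bundled algebras, varieties -/

/-- A bundled τ-algebra. -/
structure Alg (τ : Type) : Type 1 where
  carrier : Type
  op : τ → (ℕ → carrier) → carrier

/-- Subuniverses of a τ-algebra. -/
def IsSubuniv {τ : Type} (A : Alg τ) (S : Set A.carrier) : Prop :=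
  ∀ f s, (∀ i, s i ∈ S) → A.op f s ∈ S

/-- The subalgebra on a subuniverse. -/
def subAlg {τ : Type} (A : Alg τ) (S : Set A.carrier) (h : IsSubuniv A S) : Alg τ :=
  ⟨S, fun f s => ⟨A.op f (fun i => (s i).1), h f _ (fun i => (s i).2)⟩⟩

/-- Product of τ-algebras, with componentwise operations. -/
def prodAlg {τ I : Type} (A : I → Alg τ) : Alg τ :=
  ⟨∀ i, (A i).carrier, fun f s i => (A i).op f (fun n => s n i)⟩

/-- Power of a τ-algebra. -/
def powAlg {τ : Type} (A : Alg τ) (I : Type) : Alg τ := prodAlg (fun _ : I => A)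

/-- A variety: a class of τ-algebras closed under homomorphic images,
subalgebras (together with isomorphic copies), and arbitrary products. -/
def IsVariety {τ : Type} (K : Alg τ → Prop) : Prop :=
  (∀ A B : Alg τ, K A →
    (∃ α : A.carrier → B.carrier, Function.Surjective α ∧ IsAlgHom A.op B.op α) → K B) ∧
  (∀ A B : Alg τ, K A →
    (∃ α : B.carrier → A.carrier, Function.Injective α ∧ IsAlgHom B.op A.op α) → K B) ∧
  (∀ (I : Type) (A : I → Alg τ), (∀ i, K (A i)) → K (prodAlg A))

/-- The subuniverse generated by a subset. -/
def gen {τ : Type} (A : Alg τ) (X : Set A.carrier) : Set A.carrier :=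
  ⋂₀ {S | IsSubuniv A S ∧ X ⊆ S}

theorem gen_subuniv {τ : Type} (A : Alg τ) (X : Set A.carrier) :
    IsSubuniv A (gen A X) := by
  intro f s hs
  rw [gen, Set.mem_sInter]
  intro S hS
  exact hS.1 f s (fun i => Set.mem_sInter.1 (hs i) S hS)

/-- The subalgebra generated by a subset. -/
def genSubalg {τ : Type} (A : Alg τ) (X : Set A.carrier) : Alg τ :=
  subAlg A (gen A X) (gen_subuniv A X)

/-! ### Bundled infinitary clone algebras -/

/-- A bundled infinitary clone τ-algebra. -/
structure CAlg (τ : Type) : Type 1 where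
  carrier : Type
  data : CloneData τ carrier
  isClone : IsCloneAlg data

/-- Componentwise product of clone data. -/
def prodCloneData {τ I : Type} {C : I → Type} (d : ∀ i, CloneData τ (C i)) :
    CloneData τ (∀ i, C i) where
  e n := fun i => (d i).e n
  F f := fun i => (d i).F f
  q a s := fun i => (d i).q (a i) (fun n => s n i)

theorem prodCloneData_isClone {τ I : Type} {C : I → Type} (d : ∀ i, CloneData τ (C i))
    (h : ∀ i, IsCloneAlg (d i)) : IsCloneAlg (prodCloneData d) := by
  refine ⟨?_, ?_, ?_⟩
  · intro n s; funext i; exact (h i).1 n (fun m => s m i)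
  · intro x; funext i; exact (h i).2.1 (x i)
  · intro x y z; funext i; exact (h i).2.2 (x i) (fun n => y n i) (fun n => z n i)

/-- Product of infinitary clone τ-algebras. -/
def prodCAlg {τ I : Type} (Cs : I → CAlg τ) : CAlg τ :=
  ⟨∀ i, (Cs i).carrier, prodCloneData (fun i => (Cs i).data),
    prodCloneData_isClone _ (fun i => (Cs i).isClone)⟩

/-- A variety of infinitary clone τ-algebras. -/
def IsCloneVariety {τ : Type} (H : CAlg τ → Prop) : Prop :=
  (∀ C D : CAlg τ, H C →
    (∃ α : C.carrier → D.carrier, Function.Surjective α ∧ IsCloneHom C.data D.data α) → H D) ∧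
  (∀ C D : CAlg τ, H C →
    (∃ α : D.carrier → C.carrier, Function.Injective α ∧ IsCloneHom D.data C.data α) → H D) ∧
  (∀ (I : Type) (Cs : I → CAlg τ), (∀ i, H (Cs i)) → H (prodCAlg Cs))

/-! ### The operators △ and ▽ -/

/-- `K△`: clone algebras isomorphic to a subalgebra of `O^(ω)_A` for some `A ∈ K`. -/
def Tri {τ : Type} (K : Alg τ → Prop) (D : CAlg τ) : Prop :=
  ∃ A : Alg τ, K A ∧ ∃ α : D.carrier → ((ℕ → A.carrier) → A.carrier),
    Function.Injective α ∧ IsCloneHom D.data (fullCloneData A.carrier A.op) α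

/-- `H▽`: τ-algebras isomorphic to some `A` having a functional infinitary clone
τ-algebra on value domain `A` belonging to `H`. -/
def Nabla {τ : Type} (H : CAlg τ → Prop) (B : Alg τ) : Prop :=
  ∃ A : Alg τ,
    (∃ α : B.carrier → A.carrier, Function.Bijective α ∧ IsAlgHom B.op A.op α) ∧
    ∃ D : CAlg τ, H D ∧ ∃ β : D.carrier → ((ℕ → A.carrier) → A.carrier),
      Function.Injective β ∧ IsCloneHom D.data (fullCloneData A.carrier A.op) β

/-! ### Equational theories -/

/-- The equational theory of a class of τ-algebras. -/
def ThK {τ : Type} (K : Alg τ → Prop) : Set (Term τ × Term τ) :=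
  {p | ∀ A : Alg τ, K A → Term.eval A.op p.1 = Term.eval A.op p.2}

/-- The class of models of a set of identities. -/
def ModClass {τ : Type} (Sg : Set (Term τ × Term τ)) : Alg τ → Prop :=
  fun A => ∀ p ∈ Sg, Term.eval A.op p.1 = Term.eval A.op p.2

/-! ### HSP -/

/-- `B` is a homomorphic image of a subalgebra of a power of `A`. -/
def InHSP {τ : Type} (A B : Alg τ) : Prop :=
  ∃ (I : Type) (S : Set (powAlg A I).carrier) (h : IsSubuniv (powAlg A I) S)
    (α : (subAlg (powAlg A I) S h).carrier → B.carrier),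
    Function.Surjective α ∧ IsAlgHom (subAlg (powAlg A I) S h).op B.op α

/-- `B` is a homomorphic image of a subalgebra of a finite power of `A`. -/
def InHSPFin {τ : Type} (A B : Alg τ) : Prop :=
  ∃ (n : ℕ) (S : Set (powAlg A (Fin n)).carrier) (h : IsSubuniv (powAlg A (Fin n)) S)
    (α : (subAlg (powAlg A (Fin n)) S h).carrier → B.carrier),
    Function.Surjective α ∧ IsAlgHom (subAlg (powAlg A (Fin n)) S h).op B.op α

/-! ### Finite dimensionality -/

/-- An ω-ary operation has finite dimension. -/
def FinDimOp {A : Type} (g : (ℕ → A) → A) : Prop :=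
  ∃ n : ℕ, ∀ s u : ℕ → A, (∀ i < n, s i = u i) → g s = g u

/-- A τ-algebra is finite-dimensional if all its term operations have finite dimension. -/
def FinDimAlg {τ : Type} (A : Alg τ) : Prop :=
  ∀ t : Term τ, FinDimOp (Term.eval A.op t)

/-! ### Statement 15 -/

def thRel {τ : Type} (K : Alg τ → Prop) : Setoid (Term τ) where
  r t u := ∀ A : Alg τ, K A → Term.eval A.op t = Term.eval A.op u
  iseqv := ⟨fun _ _ _ => rfl, fun h A hA => (h A hA).symm,
    fun h1 h2 A hA => (h1 A hA).trans (h2 A hA)⟩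

/-- The τ-algebra `N_K↓` on the quotient of the terms by `Th(K)`. -/
noncomputable def NKalg {τ : Type} (K : Alg τ → Prop) : Alg τ :=
  ⟨Quotient (thRel K),
    fun f s => Quotient.mk (thRel K) (Term.app f (fun i => (s i).out))⟩

theorem thRel_app {τ : Type} (K : Alg τ → Prop) (f : τ) (t u : ℕ → Term τ)
    (h : ∀ i, (thRel K).r (t i) (u i)) : (thRel K).r (Term.app f t) (Term.app f u) := by
  intro A hA
  funext s
  show A.op f _ = A.op f _
  congr 1
  funext i
  exact congrFun (h i A hA) s

theorem NKalg_mk_app {τ : Type} (K : Alg τ → Prop) (f : τ) (t : ℕ → Term τ) :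
    Quotient.mk (thRel K) (Term.app f t)
      = (NKalg K).op f (fun i => Quotient.mk (thRel K) (t i)) := by
  apply Quotient.sound
  exact thRel_app K f t _ (fun i =>
    (thRel K).iseqv.symm (Quotient.exact (Quotient.out_eq _)))

theorem stmt15 (τ : Type) (K : Alg τ → Prop) (hK : IsVariety K) :
    K (NKalg K) ∧
    ∀ B : Alg τ, K B → ∀ α : ℕ → B.carrier,
      ∃! h : (NKalg K).carrier → B.carrier,
        IsAlgHom (NKalg K).op B.op h ∧
        ∀ i : ℕ, h (Quotient.mk (thRel K) (Term.e i)) = α i := by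
  constructor
  · -- membership in K
    classical
    have hwit : ∀ p : {p : Term τ × Term τ // ¬ (thRel K).r p.1 p.2},
        ∃ A : Alg τ, K A ∧ ∃ s : ℕ → A.carrier,
          Term.eval A.op p.1.1 s ≠ Term.eval A.op p.1.2 s := by
      rintro ⟨⟨t, u⟩, hp⟩
      simp only [thRel, not_forall] at hp
      have hp' : ¬ ∀ A : Alg τ, K A → Term.eval A.op t = Term.eval A.op u := hp
      push_neg at hp'
      obtain ⟨A, hA, hne⟩ := hp'
      refine ⟨A, hA, ?_⟩
      by_contra h
      push_neg at h
      exact hne (funext h)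
    choose A hA s hs using hwit
    set P := prodAlg A with hP
    have hKP : K P := hK.2.2 _ A hA
    refine hK.2.1 P (NKalg K) hKP ?_
    refine ⟨Quotient.lift (fun t p => Term.eval (A p).op t (s p))
      (fun t u h => funext fun p => congrFun (h (A p) (hA p)) (s p)), ?_, ?_⟩
    · -- injective
      intro x y hxy
      refine Quotient.inductionOn₂ x y (fun t u htu => ?_) hxy
      by_contra hne
      have hne' : ¬ (thRel K).r t u := fun h => hne (Quotient.sound h)
      exact hs ⟨(t, u), hne'⟩ (congrFun htu ⟨(t, u), hne'⟩)
    · -- homomorphism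
      intro f t
      have : (NKalg K).op f t
          = Quotient.mk (thRel K) (Term.app f (fun i => (t i).out)) := rfl
      rw [this]
      show (fun p => Term.eval (A p).op (Term.app f (fun i => (t i).out)) (s p)) = _
      funext p
      show (A p).op f _ = (A p).op f _
      congr 1
      funext i
      beta_reduce
      conv_rhs => rw [← Quotient.out_eq (t i)]
      rfl
  · -- freeness
    intro B hB α
    refine ⟨Quotient.lift (fun t => Term.eval B.op t α)
      (fun t u h => congrFun (h B hB) α), ⟨?_, fun i => rfl⟩, ?_⟩
    · intro f t
      show Term.eval B.op (Term.app f (fun i => (t i).out)) α = _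
      show B.op f _ = B.op f _
      congr 1
      funext i
      conv_rhs => rw [← Quotient.out_eq (t i)]
      rfl
    · rintro g ⟨hghom, hge⟩
      funext x
      refine Quotient.inductionOn x (fun t => ?_)
      induction t with
      | e i => exact hge i
      | app f t ih =>
        conv_lhs => rw [NKalg_mk_app]
        refine (hghom f (fun i => Quotient.mk (thRel K) (t i))).trans ?_
        show B.op f _ = B.op f _
        congr 1
        funext i
        exact ih i
end

section
/- Let A and B be τ-algebras. The following are equivalent: (1) B belongs to HSP(A), i.e., B is a homomorphic image of a subalgebra of a power of A; (2) there is a homomorphism of infinitary clone τ-algebras ε : A↑ → B↑ such that ε(t^A) = t^B for every τ-term t over {e_0, e_1, …} (in particular, the assignment t^A ↦ t^B is well-defined). -/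
/-! ### Auxiliary lemmas for Statement 18 -/

/-- Algebra homomorphisms commute with term operations. -/
theorem eval_algHom {τ A B : Type} {FA : τ → (ℕ → A) → A} {FB : τ → (ℕ → B) → B}
    {α : A → B} (h : IsAlgHom FA FB α) :
    ∀ (t : Term τ) (s : ℕ → A), α (t.eval FA s) = t.eval FB (fun i => α (s i))
  | .e _, _ => rfl
  | .app f t, s => by
      simp only [Term.eval]
      rw [h f]
      exact congrArg (FB f) (funext fun i => eval_algHom h (t i) s)

/-- The abbreviation for "every identity of `A` holds in `B`". -/
def Theta {τ : Type} (A B : Alg τ) : Prop :=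
  ∀ t t' : Term τ, Term.eval A.op t = Term.eval A.op t' →
    Term.eval B.op t = Term.eval B.op t'

/-- Key lemma: from `Theta` and an equality of "generalized term operations" over
`B`-indexed variables, deduce the corresponding equality in `B`. -/
theorem key_lemma {τ : Type} (A B : Alg τ) (θ : Theta A B)
    (t t' : Term τ) (σ σ' : ℕ → B.carrier)
    (h : ∀ w : B.carrier → A.carrier,
      Term.eval A.op t (fun i => w (σ i)) = Term.eval A.op t' (fun i => w (σ' i))) :
    Term.eval B.op t σ = Term.eval B.op t' σ' := by
  classical
  set c : ℕ → B.carrier := fun k => if k % 2 = 0 then σ (k / 2) else σ' (k / 2) with hc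
  set r : B.carrier → ℕ := fun b => if h : ∃ n, c n = b then h.choose else 0 with hrdef
  have hr : ∀ b, (∃ n, c n = b) → c (r b) = b := by
    intro b hb
    simp only [hrdef, dif_pos hb]
    exact hb.choose_spec
  have hcσ : ∀ i, c (r (σ i)) = σ i := by
    intro i
    apply hr
    refine ⟨2 * i, ?_⟩
    have h1 : (2 * i) % 2 = 0 := by omega
    have h2 : (2 * i) / 2 = i := by omega
    simp [hc, h1, h2]
  have hcσ' : ∀ i, c (r (σ' i)) = σ' i := by
    intro i
    apply hr
    refine ⟨2 * i + 1, ?_⟩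
    have h1 : (2 * i + 1) % 2 = 1 := by omega
    have h2 : (2 * i + 1) / 2 = i := by omega
    simp [hc, h1, h2]
  have h1 : Term.eval A.op (t.subst fun i => .e (r (σ i))) =
      Term.eval A.op (t'.subst fun i => .e (r (σ' i))) := by
    funext a
    rw [Term.eval_subst, Term.eval_subst]
    exact h (fun b => a (r b))
  have h2 := congrFun (θ _ _ h1) c
  rw [Term.eval_subst, Term.eval_subst] at h2
  have e1 : (fun i => Term.eval B.op (Term.e (r (σ i))) c) = σ := by
    funext i; exact hcσ i
  have e2 : (fun i => Term.eval B.op (Term.e (r (σ' i))) c) = σ' := by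
    funext i; exact hcσ' i
  rwa [e1, e2] at h2

theorem theta_of_hsp {τ : Type} (A B : Alg τ) (h : InHSP A B) : Theta A B := by
  obtain ⟨I, S, hS, α, hsur, hhom⟩ := h
  intro t t' ht
  funext v
  choose u hu using fun i => hsur (v i)
  have hval : IsAlgHom (subAlg (powAlg A I) S hS).op (powAlg A I).op Subtype.val :=
    fun f s => rfl
  have hproj : ∀ j : I, IsAlgHom (powAlg A I).op A.op (fun g => g j) :=
    fun j f s => rfl
  have hsub : Term.eval (subAlg (powAlg A I) S hS).op t u
      = Term.eval (subAlg (powAlg A I) S hS).op t' u := by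
    apply Subtype.ext
    have v1 := eval_algHom hval t u
    have v2 := eval_algHom hval t' u
    rw [v1, v2]
    funext j
    rw [eval_algHom (hproj j), eval_algHom (hproj j), ht]
  have e1 := eval_algHom hhom t u
  have e2 := eval_algHom hhom t' u
  rw [hsub] at e1
  have huv : (fun i => α (u i)) = v := funext hu
  rw [huv] at e1 e2
  rw [← e1, ← e2]

theorem hsp_of_theta {τ : Type} (A B : Alg τ) (θ : Theta A B) : InHSP A B := by
  classical
  set I := B.carrier → A.carrier with hI
  set S : Set ((powAlg A I).carrier) :=
    { g | ∃ (t : Term τ) (σ : ℕ → B.carrier),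
        g = fun w => Term.eval A.op t (fun i => w (σ i)) } with hSdef
  have comb : ∀ (f : τ) (t : ℕ → Term τ) (σ : ℕ → ℕ → B.carrier),
      (fun w : I => A.op f (fun n => Term.eval A.op (t n) (fun i => w (σ n i)))) =
      fun w => Term.eval A.op
        (Term.app f (fun n => (t n).subst (fun k => .e (Nat.pair n k))))
        (fun i => w (σ (Nat.unpair i).1 (Nat.unpair i).2)) := by
    intro f t σ
    funext w
    simp only [Term.eval, Term.eval_subst, Nat.unpair_pair]
  have hS : IsSubuniv (powAlg A I) S := by
    intro f s hs
    choose t σ hts using hs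
    refine ⟨Term.app f (fun n => (t n).subst (fun k => .e (Nat.pair n k))),
      fun i => σ (Nat.unpair i).1 (Nat.unpair i).2, ?_⟩
    rw [← comb f t σ]
    funext w
    show A.op f (fun n => s n w) = _
    exact congrArg (A.op f) (funext fun n => congrFun (hts n) w)
  set α : (subAlg (powAlg A I) S hS).carrier → B.carrier :=
    fun g => Term.eval B.op g.2.choose g.2.choose_spec.choose with hα
  have hα2 : ∀ (g : (subAlg (powAlg A I) S hS).carrier) (t : Term τ) (σ : ℕ → B.carrier),
      g.1 = (fun w => Term.eval A.op t (fun i => w (σ i))) →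
        α g = Term.eval B.op t σ := by
    intro g t σ hg
    have h1 : g.1 = fun w =>
        Term.eval A.op g.2.choose (fun i => w (g.2.choose_spec.choose i)) :=
      g.2.choose_spec.choose_spec
    apply key_lemma A B θ
    intro w
    exact congrFun (h1.symm.trans hg) w
  refine ⟨I, S, hS, α, ?_, ?_⟩
  · intro b
    have hmem : (fun w : I => w b) ∈ S := by
      refine ⟨.e 0, fun _ => b, ?_⟩
      funext w
      rfl
    exact ⟨⟨fun w => w b, hmem⟩, hα2 _ (.e 0) (fun _ => b) rfl⟩
  · intro f s
    set t : ℕ → Term τ := fun i => (s i).2.choose with ht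
    set σ : ℕ → ℕ → B.carrier := fun i => (s i).2.choose_spec.choose with hσ
    have hts : ∀ i, (s i).1 = fun w => Term.eval A.op (t i) (fun k => w (σ i k)) :=
      fun i => (s i).2.choose_spec.choose_spec
    have hval : ((subAlg (powAlg A I) S hS).op f s).1 =
        fun w => Term.eval A.op
          (Term.app f (fun n => (t n).subst (fun k => .e (Nat.pair n k))))
          (fun i => w (σ (Nat.unpair i).1 (Nat.unpair i).2)) := by
      rw [← comb f t σ]
      funext w
      show A.op f (fun n => (s n).1 w) = _
      exact congrArg (A.op f) (funext fun n => congrFun (hts n) w)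
    rw [hα2 _ _ _ hval]
    simp only [Term.eval, Term.eval_subst, Nat.unpair_pair]
    exact congrArg (B.op f) (funext fun i => (hα2 _ _ _ (hts i)).symm)

/-! ### Statement 18 -/

theorem stmt18 (τ : Type) (A B : Alg τ) :
    InHSP A B ↔
    ∃ ε : {g : (ℕ → A.carrier) → A.carrier // ∃ t : Term τ, g = Term.eval A.op t} →
        {g : (ℕ → B.carrier) → B.carrier // ∃ t : Term τ, g = Term.eval B.op t},
      IsCloneHom (upData A.op) (upData B.op) ε ∧
      ∀ t : Term τ, (ε ⟨Term.eval A.op t, ⟨t, rfl⟩⟩).1 = Term.eval B.op t := by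
  classical
  constructor
  · intro h
    have θ := theta_of_hsp A B h
    set ε : {g : (ℕ → A.carrier) → A.carrier // ∃ t : Term τ, g = Term.eval A.op t} →
        {g : (ℕ → B.carrier) → B.carrier // ∃ t : Term τ, g = Term.eval B.op t} :=
      fun g => ⟨Term.eval B.op g.2.choose, ⟨_, rfl⟩⟩ with hε
    have hkey : ∀ (g : {g : (ℕ → A.carrier) → A.carrier // ∃ t : Term τ,
        g = Term.eval A.op t}) (t : Term τ),
        g.1 = Term.eval A.op t → (ε g).1 = Term.eval B.op t := by
      intro g t hg
      exact θ _ _ (g.2.choose_spec.symm.trans hg)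
    refine ⟨ε, ⟨?_, ?_, ?_⟩, fun t => hkey _ t rfl⟩
    · intro i
      apply Subtype.ext
      have : ((upData A.op).e i).1 = Term.eval A.op (.e i) := rfl
      rw [hkey _ _ this]
      rfl
    · intro f
      apply Subtype.ext
      have h1 : ((upData A.op).F f).1 = Term.eval A.op (.app f Term.e) := by
        funext s
        rfl
      rw [hkey _ _ h1]
      funext s
      rfl
    · intro g hs
      apply Subtype.ext
      have h1 : ((upData A.op).q g hs).1 =
          Term.eval A.op (g.2.choose.subst (fun i => (hs i).2.choose)) := by
        funext s
        rw [Term.eval_subst]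
        show g.1 (fun i => (hs i).1 s) = _
        calc g.1 (fun i => (hs i).1 s)
            = Term.eval A.op g.2.choose (fun i => (hs i).1 s) :=
              congrFun g.2.choose_spec _
          _ = Term.eval A.op g.2.choose
                (fun i => Term.eval A.op (hs i).2.choose s) :=
              congrArg _ (funext fun i => congrFun (hs i).2.choose_spec s)
      rw [hkey _ _ h1]
      show _ = fun s => (ε g).1 (fun i => (ε (hs i)).1 s)
      funext s
      rw [Term.eval_subst]
  · rintro ⟨ε, _, hε⟩
    apply hsp_of_theta
    intro t t' ht
    have : (⟨Term.eval A.op t, ⟨t, rfl⟩⟩ :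
        {g : (ℕ → A.carrier) → A.carrier // ∃ t : Term τ, g = Term.eval A.op t}) =
        ⟨Term.eval A.op t', ⟨t', rfl⟩⟩ := Subtype.ext ht
    rw [← hε t, ← hε t', this]
end
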